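/- Let S be a string in which the character σ occurs exactly ℓ ≥ 2 times, let Y be an Algorithm-1 output for S and σ, and let Z be an Algorithm-2 output for S and σ built from Y. Then the square subsequence ZZ of S is not inner-extendable; that is, there are no character y and nonempty strings Z₁, Z₂ with Z = Z₁Z₂ such that Z₁yZ₂Z₁yZ₂ is a subsequence of S. -/

import Mathlib

open List

variable {α : Type*}

/-- The substring of `S` from 1-indexed position `a` to position `b`, inclusive
(empty when `a > b`). -/
def substr (S : List α) (a b : ℕ) : List α := (S.drop (a - 1)).take (b + 1 - a)

/-- `X` is a square subsequence of `S`. -/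
def IsSquareSubseq (S X : List α) : Prop := (∃ Y, X = Y ++ Y) ∧ X <+ S

/-- `X` is a maximal square subsequence of `S`: it is a square subsequence of `S` and
is not a proper subsequence of any other square subsequence of `S`. -/
def IsMaxSquareSubseq (S X : List α) : Prop :=
  IsSquareSubseq S X ∧ ∀ X', IsSquareSubseq S X' → X <+ X' → X' = X

/-- The square subsequence `Y ++ Y` is right-extendable in `S`. -/
def RightExtendable (S Y : List α) : Prop := ∃ y : α, Y ++ [y] ++ Y ++ [y] <+ S

/-- The square subsequence `Y ++ Y` is left-extendable in `S`. -/
def LeftExtendable (S Y : List α) : Prop := ∃ y : α, [y] ++ Y ++ [y] ++ Y <+ S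

/-- The square subsequence `Y ++ Y` is inner-extendable in `S`. -/
def InnerExtendable (S Y : List α) : Prop :=
  ∃ (y : α) (Y₁ Y₂ : List α), Y = Y₁ ++ Y₂ ∧ Y₁ ≠ [] ∧ Y₂ ≠ [] ∧
    Y₁ ++ [y] ++ Y₂ ++ Y₁ ++ [y] ++ Y₂ <+ S

/-- `X` is a `k`-repeating subsequence of `S`: the `k`-fold concatenation of `X`
is a subsequence of `S`. -/
def IsKRep (k : ℕ) (S X : List α) : Prop := (List.replicate k X).flatten <+ S

/-- `X` is a maximal `k`-repeating subsequence of `S`: the only `k`-repeating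
subsequence of `S` having `X` as a subsequence is `X` itself. -/
def IsMaxKRep (k : ℕ) (S X : List α) : Prop :=
  IsKRep k S X ∧ ∀ Y, IsKRep k S Y → X <+ Y → Y = X

/-- A `σ`-split point for `A` and `B` in `S`: a strictly increasing `k`-tuple of
1-indexed positions of `S` carrying `σ`, such that around each position `p i` one
can place `A` immediately to its left and `B` immediately to its right within a
window `[a i, b i]`, with consecutive windows disjoint (`b i < a (i+1)`). -/
def IsSplitPoint (S : List α) (σ : α) (A B : List α) (k : ℕ) (p : Fin k → ℕ) : Prop :=
  StrictMono p ∧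
  (∀ i, 1 ≤ p i ∧ p i ≤ S.length ∧ substr S (p i) (p i) = [σ]) ∧
  ∃ a b : Fin k → ℕ,
    (∀ i, 1 ≤ a i ∧ a i ≤ p i ∧ p i ≤ b i ∧ b i ≤ S.length ∧
      A <+ substr S (a i) (p i - 1) ∧ B <+ substr S (p i + 1) (b i)) ∧
    ∀ i j : Fin k, (i : ℕ) + 1 = (j : ℕ) → b i < a j

/-- A `σ`-start for `σ^r` in `S`: a strictly increasing `k`-tuple of 1-indexed
positions of `S` carrying `σ`, such that (with `p (k+1) = |S| + 1`) the string
`σ^r` is a subsequence of `S[p j .. p (j+1) − 1]` for every `j`. -/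
def IsSigmaStart (S : List α) (σ : α) (r k : ℕ) (p : Fin k → ℕ) : Prop :=
  StrictMono p ∧
  (∀ i, 1 ≤ p i ∧ p i ≤ S.length ∧ substr S (p i) (p i) = [σ]) ∧
  ∀ i : Fin k, List.replicate r σ <+
    substr S (p i) ((if h : (i : ℕ) + 1 < k then p ⟨(i : ℕ) + 1, h⟩ else S.length + 1) - 1)

/-- `W` is a maximal common subsequence of `T₁` and `T₂` containing `X`. -/
def IsMCSContaining (T₁ T₂ X W : List α) : Prop :=
  X <+ W ∧ W <+ T₁ ∧ W <+ T₂ ∧ ∀ W', W <+ W' → W' <+ T₁ → W' <+ T₂ → W' = W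

/-- `p` is the 1-indexed position of the `t`-th occurrence (1-indexed `t`) of `σ` in `S`:
`S[p] = σ` and exactly `t - 1` occurrences of `σ` lie strictly before position `p`. -/
def NthOccPos [DecidableEq α] (S : List α) (σ : α) (t p : ℕ) : Prop :=
  1 ≤ p ∧ p ≤ S.length ∧ substr S p p = [σ] ∧ (substr S 1 (p - 1)).count σ = t - 1

/-- `j` is the leftmost anchor of `Y` with position `i` in `S`: the smallest index `j`
such that `Y` is a subsequence of `S[i..j]`. -/
def LeftmostAnchor (S Y : List α) (i j : ℕ) : Prop :=
  Y <+ substr S i j ∧ ∀ j', Y <+ substr S i j' → j ≤ j'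

/-- `Y` is an Algorithm-1 output for `S` and `σ` (Algorithm 1 of the paper), where
`ℓ = count σ S` and `e = ⌊ℓ/2⌋`. -/
def Alg1Output [DecidableEq α] (S : List α) (σ : α) (Y : List α) : Prop :=
  ∃ (i1 ie1 : ℕ) (Y₀ : List α),
    NthOccPos S σ 1 i1 ∧
    NthOccPos S σ (S.count σ / 2 + 1) ie1 ∧
    IsMCSContaining (substr S i1 (ie1 - 1)) (substr S ie1 S.length)
      (List.replicate (S.count σ / 2) σ) Y₀ ∧
    ((Y = Y₀ ∧ (Odd (S.count σ) → ∀ ie2, NthOccPos S σ (S.count σ / 2 + 2) ie2 →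
        ¬ Y₀ <+ substr S ie2 S.length)) ∨
     (Odd (S.count σ) ∧ ∃ ie2, NthOccPos S σ (S.count σ / 2 + 2) ie2 ∧
        Y₀ <+ substr S ie2 S.length ∧
        IsMCSContaining (substr S i1 (ie2 - 1)) (substr S ie2 S.length) Y₀ Y))

/-- `Z` is an Algorithm-2 output for `S` and `σ` built from the Algorithm-1 output `Y`
(Algorithm 2 of the paper). -/
def Alg2Output [DecidableEq α] (S : List α) (σ : α) (Y Z : List α) : Prop :=
  ∃ (i1 i2 j1 : ℕ) (Z₀ : List α),
    NthOccPos S σ 1 i1 ∧ NthOccPos S σ 2 i2 ∧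
    LeftmostAnchor S Y i1 j1 ∧
    IsMCSContaining (substr S 1 j1) (substr S (j1 + 1) S.length) Y Z₀ ∧
    ((Z = Z₀ ∧ (Odd (S.count σ) → ∀ j2, LeftmostAnchor S Y i2 j2 →
        ¬ Z₀ <+ substr S (j2 + 1) S.length)) ∨
     (Odd (S.count σ) ∧ ∃ j2, LeftmostAnchor S Y i2 j2 ∧
        Z₀ <+ substr S (j2 + 1) S.length ∧
        IsMCSContaining (substr S 1 j2) (substr S (j2 + 1) S.length) Z₀ Z))


namespace Aux15

lemma cons_sublist_of_notmem {α : Type*} {σ : α} {V A L : List α} (hA : σ ∉ A)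
    (h : σ :: V <+ A ++ L) : σ :: V <+ L := by
  induction A with
  | nil => simpa using h
  | cons a A ih =>
    simp only [List.cons_append] at h
    rcases List.sublist_cons_iff.1 h with h' | ⟨r, hr, h'⟩
    · exact ih (fun hm => hA (List.mem_cons_of_mem _ hm)) h'
    · injection hr with h1 h2
      exact absurd (h1 ▸ List.mem_cons_self (a := a) (l := A)) hA

lemma split_at_first_sigma {α : Type*} {σ : α} : ∀ (T A V : List α), A ++ σ :: V <+ T →
    ∃ P Q, T = P ++ σ :: Q ∧ A <+ P ∧ V <+ Q := by
  intro T
  induction T with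
  | nil =>
    intro A V h
    have := List.sublist_nil.1 h
    simp at this
  | cons t T ih =>
    intro A V h
    rcases List.sublist_cons_iff.1 h with h' | ⟨r, hr, h'⟩
    · obtain ⟨P, Q, rfl, hA, hV⟩ := ih A V h'
      exact ⟨t :: P, Q, rfl, hA.trans (List.sublist_cons_self t P), hV⟩
    · cases A with
      | nil =>
        injection hr with h1 h2
        subst h1
        exact ⟨[], T, rfl, List.nil_sublist _, h2 ▸ h'⟩
      | cons a A =>
        injection hr with h1 h2
        obtain ⟨P, Q, rfl, hA, hV⟩ := ih A V (by rw [← h2] at h'; exact h')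
        subst h1
        exact ⟨a :: P, Q, rfl, List.cons_sublist_cons.2 hA, hV⟩

lemma exists_first_split {α : Type*} [DecidableEq α] {σ : α} {L : List α} (h : σ ∈ L) :
    ∃ A V, L = A ++ σ :: V ∧ σ ∉ A := by
  induction L with
  | nil => simp at h
  | cons a L ih =>
    by_cases ha : a = σ
    · exact ⟨[], L, by rw [ha]; rfl, by simp⟩
    · have hm : σ ∈ L := by
        rcases List.mem_cons.1 h with h1 | h1
        · exact absurd h1.symm ha
        · exact h1
      obtain ⟨A, V, rfl, hA⟩ := ih hm
      refine ⟨a :: A, V, rfl, ?_⟩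
      simp only [List.mem_cons, not_or]
      exact ⟨fun hs => ha hs.symm, hA⟩

lemma take_sublist_take {α : Type*} {l : List α} {m m' : ℕ} (h : m ≤ m') :
    l.take m <+ l.take m' := by
  have : l.take m = (l.take m').take m := by
    rw [List.take_take]; congr 1; omega
  rw [this]
  exact List.take_sublist _ _

lemma substr_one {α : Type*} (S : List α) (j : ℕ) : substr S 1 j = S.take j := by
  simp [substr]

lemma substr_all {α : Type*} (S : List α) (a : ℕ) : substr S a S.length = S.drop (a-1) := by
  unfold substr
  apply List.take_of_length_le
  rw [List.length_drop]; omega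

lemma substr_drop {α : Type*} (S : List α) (j : ℕ) : substr S (j+1) S.length = S.drop j := by
  rw [substr_all, Nat.add_sub_cancel]

lemma substr_mono {α : Type*} {S : List α} {a b a' b' : ℕ} (h0 : 1 ≤ a') (h1 : a' ≤ a) (h3 : b ≤ b') :
    substr S a b <+ substr S a' b' := by
  by_cases hab : a ≤ b + 1
  · unfold substr
    have hdrop : S.drop (a-1) = (S.drop (a'-1)).drop (a - a') := by
      rw [List.drop_drop]; congr 1; omega
    rw [hdrop]
    refine List.Sublist.trans ?_ (take_sublist_take (l := S.drop (a'-1))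
      (m := (a - a') + (b+1-a)) (m' := b'+1-a') (by omega))
    rw [List.take_add]
    exact List.sublist_append_right _ _
  · have h0 : b + 1 - a = 0 := by omega
    unfold substr
    rw [h0]
    simp

lemma take_eq_take_append_substr {α : Type*} (S : List α) {i j : ℕ} (hi : 1 ≤ i)
    (hij : i ≤ j + 1) : S.take j = S.take (i-1) ++ substr S i j := by
  unfold substr
  rw [← List.take_add]
  congr 1
  omega

lemma splice_take {α : Type*} {S A B : List α} {i j : ℕ} (hi : 1 ≤ i) (hij : i ≤ j + 1)
    (hA : A <+ S.take (i-1)) (hB : B <+ substr S i j) : A ++ B <+ S.take j := by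
  rw [take_eq_take_append_substr S hi hij]
  exact hA.append hB

lemma sublist_nonempty_bound {α : Type*} {S Y : List α} {i j : ℕ} (hY : Y ≠ [])
    (h : Y <+ substr S i j) : i ≤ j := by
  by_contra hc
  push_neg at hc
  have h0 : j + 1 - i = 0 := by omega
  unfold substr at h
  rw [h0] at h
  simp at h
  exact hY h

end Aux15


namespace Aux15

variable {α : Type*} [DecidableEq α]

lemma nthOcc_drop {S : List α} {σ : α} {t p : ℕ} (h : NthOccPos S σ t p) :
    S.drop (p-1) = σ :: S.drop p := by
  obtain ⟨h1, h2, h3, _⟩ := h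
  have he : substr S p p = (S.drop (p-1)).take 1 := by
    unfold substr; congr 1; omega
  rw [he] at h3
  rcases hd : S.drop (p-1) with _ | ⟨a, T⟩
  · rw [hd] at h3; simp at h3
  · rw [hd] at h3
    simp only [List.take_succ_cons, List.take_zero] at h3
    injection h3 with ha _
    subst ha
    have : S.drop p = T := by
      have : S.drop p = (S.drop (p-1)).drop 1 := by
        rw [List.drop_drop]; congr 1; omega
      rw [this, hd]; rfl
    rw [this]

lemma count_take_pred {S : List α} {σ : α} {t p : ℕ} (h : NthOccPos S σ t p) :
    (S.take (p-1)).count σ = t - 1 := by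
  have h4 := h.2.2.2
  unfold substr at h4
  simpa using h4

lemma count_take_nthOcc {S : List α} {σ : α} {t p : ℕ} (ht : 1 ≤ t) (h : NthOccPos S σ t p) :
    (S.take p).count σ = t := by
  have hdrop := nthOcc_drop h
  have hp1 : 1 ≤ p := h.1
  have hsplit : S.take p = S.take (p-1) ++ [σ] := by
    have hp : p = (p-1) + 1 := by omega
    rw [hp, List.take_add]
    rw [← hp, hdrop]
    rfl
  have h1 : List.count σ [σ] = 1 := by simp
  rw [hsplit, List.count_append, count_take_pred h, h1]
  omega

lemma nthOcc_lt {S : List α} {σ : α} {t t' p p' : ℕ} (ht : 1 ≤ t) (htt : t < t')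
    (h : NthOccPos S σ t p) (h' : NthOccPos S σ t' p') : p < p' := by
  by_contra hc
  push_neg at hc
  have e1 : (S.take p).count σ = t := count_take_nthOcc ht h
  have e2 : (S.take p').count σ = t' := count_take_nthOcc (by omega) h'
  have : (S.take p').count σ ≤ (S.take p).count σ :=
    (take_sublist_take hc).count_le σ
  omega

lemma nthOcc_unique {S : List α} {σ : α} {t p p' : ℕ} (ht : 1 ≤ t)
    (h : NthOccPos S σ t p) (h' : NthOccPos S σ t p') : p = p' := by
  rcases lt_trichotomy p p' with hlt | he | hlt
  · exfalso
    have e1 : (S.take p).count σ = t := count_take_nthOcc ht h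
    have e2 := count_take_pred h'
    have : (S.take p).count σ ≤ (S.take (p'-1)).count σ :=
      (take_sublist_take (by omega)).count_le σ
    omega
  · exact he
  · exfalso
    have e1 : (S.take p').count σ = t := count_take_nthOcc ht h'
    have e2 := count_take_pred h
    have : (S.take p').count σ ≤ (S.take (p-1)).count σ :=
      (take_sublist_take (by omega)).count_le σ
    omega

lemma m_bound {S : List α} {σ : α} {c m q : ℕ} (hq : NthOccPos S σ (c+1) q)
    (hm : (S.take m).count σ ≤ c) : m ≤ q - 1 := by
  by_contra hc
  push_neg at hc
  have e1 : (S.take q).count σ = c+1 := count_take_nthOcc (by omega) hq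
  have : (S.take q).count σ ≤ (S.take m).count σ :=
    (take_sublist_take (by omega)).count_le σ
  omega

lemma substr_cons_of_nthOcc {S : List α} {σ : α} {t p b : ℕ} (h : NthOccPos S σ t p)
    (hb : p ≤ b) : ∃ T, substr S p b = σ :: T := by
  unfold substr
  rw [nthOcc_drop h]
  have : b + 1 - p = (b - p) + 1 := by omega
  rw [this]
  exact ⟨_, rfl⟩

lemma mcs_cons {σ : α} {T₁ T₂ T₁' T₂' X W : List α} (h1 : T₁ = σ :: T₁') (h2 : T₂ = σ :: T₂')
    (h : IsMCSContaining T₁ T₂ X W) : ∃ W', W = σ :: W' := by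
  subst h1; subst h2
  obtain ⟨hXW, hW1, hW2, hmax⟩ := h
  by_cases hc : ∃ W', W = σ :: W'
  · exact hc
  · exfalso
    push_neg at hc
    have hW1' : W <+ T₁' := by
      rcases List.sublist_cons_iff.1 hW1 with h' | ⟨r, hr, _⟩
      · exact h'
      · exact absurd hr (hc r)
    have hW2' : W <+ T₂' := by
      rcases List.sublist_cons_iff.1 hW2 with h' | ⟨r, hr, _⟩
      · exact h'
      · exact absurd hr (hc r)
    have := hmax (σ :: W) (List.sublist_cons_self σ W)
      (List.cons_sublist_cons.2 hW1') (List.cons_sublist_cons.2 hW2')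
    have hl := congrArg List.length this
    simp at hl

lemma prefix_copy {S A V : List α} {σ : α} {m : ℕ} (hm : m ≤ S.length)
    (h : A ++ σ :: V <+ S.take m) :
    ∃ p, NthOccPos S σ ((S.take (p-1)).count σ + 1) p ∧ A <+ S.take (p-1) ∧
      σ :: V <+ substr S p m ∧ p ≤ m ∧ 1 ≤ p := by
  obtain ⟨P, Q, hPQ, hAP, hVQ⟩ := split_at_first_sigma (S.take m) A V h
  have hlen : P.length + 1 + Q.length = m := by
    have := congrArg List.length hPQ
    simp only [List.length_take, List.length_append, List.length_cons] at this
    omega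
  have hS : S = P ++ (σ :: (Q ++ S.drop m)) := by
    conv_lhs => rw [← List.take_append_drop m S]
    rw [hPQ]
    simp
  have hPtake : S.take P.length = P := by
    calc S.take P.length = (P ++ (σ :: (Q ++ S.drop m))).take P.length := by rw [← hS]
    _ = P := List.take_left (l₁ := P)
  have hdropP : S.drop P.length = σ :: (Q ++ S.drop m) := by
    calc S.drop P.length = (P ++ (σ :: (Q ++ S.drop m))).drop P.length := by rw [← hS]
    _ = _ := List.drop_left (l₁ := P)
  have hsub : substr S (P.length + 1) m = σ :: Q := by
    unfold substr
    have h1 : P.length + 1 - 1 = P.length := rfl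
    rw [h1, hdropP]
    have h2 : m + 1 - (P.length + 1) = Q.length + 1 := by omega
    rw [h2]
    simp only [List.take_succ_cons]
    congr 1
    exact List.take_left (l₁ := Q)
  refine ⟨P.length + 1, ⟨by omega, by omega, ?_, by rw [substr_one]; omega⟩, ?_, ?_, by omega, by omega⟩
  · unfold substr
    have h1 : P.length + 1 - 1 = P.length := rfl
    have h2 : P.length + 1 + 1 - (P.length + 1) = 1 := by omega
    rw [h1, h2, hdropP]
    rfl
  · have h1 : P.length + 1 - 1 = P.length := rfl
    rw [h1, hPtake]
    exact hAP
  · rw [hsub]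
    exact List.cons_sublist_cons.2 hVQ

lemma suffix_copy {S A V : List α} {σ : α} {m : ℕ} (hm : m ≤ S.length)
    (h : A ++ σ :: V <+ S.drop m) :
    ∃ p, NthOccPos S σ ((S.take (p-1)).count σ + 1) p ∧ σ :: V <+ S.drop (p-1) ∧
      m ≤ p - 1 ∧ 1 ≤ p := by
  obtain ⟨P, Q, hPQ, hAP, hVQ⟩ := split_at_first_sigma (S.drop m) A V h
  have hS : S = (S.take m ++ P) ++ (σ :: Q) := by
    conv_lhs => rw [← List.take_append_drop m S]
    rw [hPQ]
    simp
  have hlen2 : (S.take m ++ P).length = m + P.length := by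
    simp only [List.length_append, List.length_take]
    omega
  have hlenS : S.length = m + P.length + 1 + Q.length := by
    have := congrArg List.length hS
    simp only [List.length_append, List.length_take, List.length_cons] at this
    omega
  have hPtake : S.take (m + P.length) = S.take m ++ P := by
    calc S.take (m + P.length) = ((S.take m ++ P) ++ (σ :: Q)).take (m + P.length) := by
          rw [← hS]
    _ = _ := by rw [← hlen2]; exact List.take_left
  have hdropP : S.drop (m + P.length) = σ :: Q := by
    calc S.drop (m + P.length) = ((S.take m ++ P) ++ (σ :: Q)).drop (m + P.length) := by
          rw [← hS]
    _ = _ := by rw [← hlen2]; exact List.drop_left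
  have h1 : m + P.length + 1 - 1 = m + P.length := rfl
  refine ⟨m + P.length + 1, ⟨by omega, by omega, ?_, by rw [substr_one]; omega⟩, ?_, by omega, by omega⟩
  · unfold substr
    have h2 : m + P.length + 1 + 1 - (m + P.length + 1) = 1 := by omega
    rw [h1, h2, hdropP]
    rfl
  · rw [h1, hdropP]
    exact List.cons_sublist_cons.2 hVQ

end Aux15

/-- If `σ` occurs exactly `ℓ ≥ 2` times in `S`, `Y` is an Algorithm-1
output and `Z` an Algorithm-2 output built from `Y`, then `ZZ` is not inner-extendable. -/
theorem alg2_output_not_innerExtendable {α : Type*} [DecidableEq α] (S : List α) (σ : α)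
    (hℓ : 2 ≤ S.count σ) (Y Z : List α)
    (hY : Alg1Output S σ Y) (hZ : Alg2Output S σ Y Z) :
    ¬ InnerExtendable S Z := by
  classical
  rintro ⟨y, Z₁, Z₂, hZsplit, hZ₁ne, hZ₂ne, hsq⟩
  obtain ⟨i1a, ie1, Y₀, hi1a, hie1, hMCS0, hcase1⟩ := hY
  obtain ⟨i1, i2, j1, Z₀, hi1, hi2, hanch1, hMCS1, hcase2⟩ := hZ
  have hi1eq : i1a = i1 := Aux15.nthOcc_unique le_rfl hi1a hi1
  subst i1a
  set e := S.count σ / 2 with he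
  have heℓ : 2 * e ≤ S.count σ ∧ S.count σ ≤ 2 * e + 1 := by omega
  have he1 : 1 ≤ e := by omega
  -- basic occurrence facts
  have hi11 : 1 ≤ i1 := hi1.1
  have hi21 : 1 ≤ i2 := hi2.1
  have hie11 : 1 ≤ ie1 := hie1.1
  have hie1n : ie1 ≤ S.length := hie1.2.1
  have hi1i2 : i1 < i2 := Aux15.nthOcc_lt le_rfl (by omega) hi1 hi2
  have hi1ie1 : i1 < ie1 := Aux15.nthOcc_lt le_rfl (by omega) hi1 hie1
  have hct1 : (S.take (i1-1)).count σ = 0 := by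
    have := Aux15.count_take_pred hi1; omega
  have hcti2 : (S.take (i2-1)).count σ = 1 := by
    have := Aux15.count_take_pred hi2; omega
  have hctie1 : (S.take (ie1-1)).count σ = e := by
    have := Aux15.count_take_pred hie1; omega
  -- window head forms
  obtain ⟨T1w, hT1w⟩ := Aux15.substr_cons_of_nthOcc hi1 (b := ie1 - 1) (by omega)
  obtain ⟨T2w, hT2w⟩ := Aux15.substr_cons_of_nthOcc hie1 (b := S.length) hie1.2.1
  obtain ⟨Yh0, hY₀c⟩ := Aux15.mcs_cons hT1w hT2w hMCS0
  -- count of window 1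
  have hwin1cnt : (substr S i1 (ie1-1)).count σ = e := by
    have hsplitw := Aux15.take_eq_take_append_substr S (i := i1) (j := ie1 - 1)
      (by omega) (by omega)
    have hcc := congrArg (List.count σ) hsplitw
    rw [List.count_append] at hcc
    omega
  have hcntY₀ge : e ≤ Y₀.count σ := by
    have h1 := hMCS0.1.count_le σ
    have h2 : (List.replicate e σ).count σ = e := by simp
    omega
  -- Y facts
  have hYfacts : (∃ Yh, Y = σ :: Yh) ∧ Y.count σ = e ∧ Y₀ <+ Y := by
    rcases hcase1 with ⟨hYeq, _⟩ | ⟨hodd, ie2, hie2, hsb, hMCS0'⟩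
    · refine ⟨⟨Yh0, by rw [hYeq, hY₀c]⟩, ?_, by rw [hYeq]⟩
      have h1 := hMCS0.2.1.count_le σ
      have h2 := congrArg (List.count σ) hYeq
      omega
    · have hi1ie2 : i1 < ie2 := Aux15.nthOcc_lt le_rfl (by omega) hi1 hie2
      obtain ⟨T1w', hT1w'⟩ := Aux15.substr_cons_of_nthOcc hi1 (b := ie2 - 1) (by omega)
      obtain ⟨T2w', hT2w'⟩ := Aux15.substr_cons_of_nthOcc hie2 (b := S.length) hie2.2.1
      obtain ⟨Yh, hYc⟩ := Aux15.mcs_cons hT1w' hT2w' hMCS0'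
      refine ⟨⟨Yh, hYc⟩, ?_, hMCS0'.1⟩
      -- count σ of Y: Y <+ substr S ie2 S.length, which has count ℓ - (e+1)
      have hoddℓ : S.count σ = 2*e + 1 := by
        rcases Nat.odd_iff.1 hodd with h1
        omega
      have hctie2 : (S.take (ie2-1)).count σ = e + 1 := by
        have := Aux15.count_take_pred hie2; omega
      have hdw : substr S ie2 S.length = S.drop (ie2-1) := Aux15.substr_all S ie2
      have hcdrop : (S.drop (ie2-1)).count σ = e := by
        have h3 := congrArg (List.count σ) (List.take_append_drop (ie2-1) S)
        rw [List.count_append] at h3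
        omega
      have h4 := hMCS0'.2.2.1.count_le σ
      rw [hdw, hcdrop] at h4
      have h5 : e ≤ Y.count σ := le_trans hcntY₀ge (hMCS0'.1.count_le σ)
      omega
  obtain ⟨⟨Yh, hYc⟩, hcntY, hY₀Y⟩ := hYfacts
  have hYne : Y ≠ [] := by rw [hYc]; exact List.cons_ne_nil _ _
  have hYZ₀ : Y <+ Z₀ := hMCS1.1
  have hZ₀Z : Z₀ <+ Z := by
    rcases hcase2 with ⟨hZeq0, _⟩ | ⟨_, j2, _, _, hMCS2⟩
    · rw [hZeq0]
    · exact hMCS2.1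
  have hYZ : Y <+ Z := hYZ₀.trans hZ₀Z
  -- the extended string
  obtain ⟨Z', hZ'def⟩ : ∃ Z', Z' = Z₁ ++ [y] ++ Z₂ := ⟨_, rfl⟩
  have hZZ' : Z <+ Z' := by
    rw [hZsplit, hZ'def, List.append_assoc]
    exact (List.Sublist.refl Z₁).append (List.sublist_cons_self y Z₂)
  have hlenZ' : Z'.length = Z.length + 1 := by
    rw [hZsplit, hZ'def]
    simp only [List.length_append, List.length_cons, List.length_nil]
    omega
  have hsq' : Z' ++ Z' <+ S := by
    rw [hZ'def]
    simpa [List.append_assoc] using hsq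
  -- counts of Z'
  have hcntZ : Z.count σ ≤ Z'.count σ := hZZ'.count_le σ
  have hcntZ' : Z'.count σ = e := by
    have h1 := hsq'.count_le σ
    rw [List.count_append] at h1
    have h2 := hYZ.count_le σ
    omega
  -- split S into two parts
  obtain ⟨S₁, S₂, hSsplit, hc1, hc2⟩ := List.append_sublist_iff.1 hsq'
  have hS₁ : S₁ = S.take S₁.length := by rw [hSsplit]; exact List.take_left.symm
  have hS₂ : S₂ = S.drop S₁.length := by rw [hSsplit]; exact List.drop_left.symm
  set m := S₁.length with hm
  have hmlen : m ≤ S.length := by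
    rw [hSsplit]
    simp [hm]
  rw [hS₁] at hc1
  rw [hS₂] at hc2
  -- decompose Z' at its first σ
  have hσZ' : σ ∈ Z' := by
    rw [← List.count_pos_iff (a := σ)]
    omega
  obtain ⟨A', V', hZ'split, hA'σ⟩ := Aux15.exists_first_split hσZ'
  have hcntV' : (σ :: V').count σ = e := by
    have h1 := congrArg (List.count σ) hZ'split
    rw [List.count_append, List.count_eq_zero_of_not_mem hA'σ] at h1
    omega
  rw [hZ'split] at hc1 hc2
  -- first copy analysis
  obtain ⟨p₁, hp₁occ, hA'p₁, hV'p₁, hp₁m, hp₁1⟩ := Aux15.prefix_copy hmlen hc1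
  set k₁m1 := (S.take (p₁-1)).count σ with hk₁def
  -- count bookkeeping
  have hc₁e : e ≤ (S.take m).count σ := by
    have h1 := hc1.count_le σ
    have h2 : (A' ++ σ :: V').count σ = e := by
      rw [List.count_append, List.count_eq_zero_of_not_mem hA'σ]
      omega
    omega
  have hc₂e : e ≤ (S.drop m).count σ := by
    have h1 := hc2.count_le σ
    have h2 : (A' ++ σ :: V').count σ = e := by
      rw [List.count_append, List.count_eq_zero_of_not_mem hA'σ]
      omega
    omega
  have hsum : (S.take m).count σ + (S.drop m).count σ = S.count σ := by
    rw [← List.count_append, List.take_append_drop]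
  have hc₁hi : (S.take m).count σ ≤ e + 1 := by omega
  have hk₁cnt : k₁m1 + e ≤ (S.take m).count σ := by
    have hsplitw := Aux15.take_eq_take_append_substr S (i := p₁) (j := m) hp₁1 (by omega)
    have hcc := congrArg (List.count σ) hsplitw
    rw [List.count_append] at hcc
    have h3 := hV'p₁.count_le σ
    omega
  have hk₁ : k₁m1 ≤ 1 := by omega
  have hi1p₁ : i1 ≤ p₁ := by
    have h0 : k₁m1 = 0 ∨ k₁m1 = 1 := by omega
    rcases h0 with h0 | h0
    · have := Aux15.nthOcc_unique le_rfl hi1 (by rw [h0] at hp₁occ; exact hp₁occ)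
      omega
    · have := Aux15.nthOcc_lt le_rfl (by omega : 1 < k₁m1 + 1) hi1 hp₁occ
      omega
  -- second copy analysis
  obtain ⟨p₂, hp₂occ, hV'p₂, hmp₂, hp₂1⟩ := Aux15.suffix_copy hmlen hc2
  set k₂m1 := (S.take (p₂-1)).count σ with hk₂def
  have hk₂lo : (S.take m).count σ ≤ k₂m1 := (Aux15.take_sublist_take hmp₂).count_le σ
  have hk₂hi : k₂m1 + e ≤ S.count σ := by
    have h3 := congrArg (List.count σ) (List.take_append_drop (p₂-1) S)
    rw [List.count_append] at h3
    have h4 := hV'p₂.count_le σ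
    omega
  have hYV' : Y <+ σ :: V' := by
    have h1 : Y <+ A' ++ σ :: V' := hZ'split ▸ (hYZ.trans hZZ')
    rw [hYc] at h1 ⊢
    exact Aux15.cons_sublist_of_notmem hA'σ h1
  -- identify σ :: V' = Y
  have hVY : σ :: V' = Y := by
    have hk₂cases : k₂m1 = e ∨ k₂m1 = e + 1 := by omega
    rcases hk₂cases with hk₂ | hk₂
    · -- second copy starts at occurrence e+1
      have hp₂ie1 : p₂ = ie1 :=
        Aux15.nthOcc_unique (by omega) (by rw [hk₂] at hp₂occ; exact hp₂occ) hie1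
      have hmie1 : m ≤ ie1 - 1 := Aux15.m_bound hie1 (by omega)
      have hw1 : σ :: V' <+ substr S i1 (ie1 - 1) :=
        hV'p₁.trans (Aux15.substr_mono hi1.1 hi1p₁ hmie1)
      have hw2 : σ :: V' <+ substr S ie1 S.length := by
        rw [Aux15.substr_all]
        rw [hp₂ie1] at hV'p₂
        exact hV'p₂
      rcases hcase1 with ⟨hYeq, _⟩ | ⟨hodd, ie2, hie2, hsb, hMCS0'⟩
      · have h1 := hMCS0.2.2.2 (σ :: V') (hY₀Y.trans hYV') hw1 hw2
        rw [h1, hYeq]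
      · have h1 := hMCS0.2.2.2 (σ :: V') (hY₀Y.trans hYV') hw1 hw2
        have h2 : Y = Y₀ := List.Sublist.antisymm (h1 ▸ hYV') hY₀Y
        rw [h1, h2]
    · -- second copy starts at occurrence e+2
      have hoddℓ : S.count σ = 2*e + 1 := by omega
      rcases hcase1 with ⟨hYeq, hside⟩ | ⟨hodd, ie2, hie2, hsb, hMCS0'⟩
      · exfalso
        have hoY : Odd (S.count σ) := Nat.odd_iff.2 (by omega)
        refine hside hoY p₂ (by rw [hk₂] at hp₂occ; exact hp₂occ) ?_
        rw [Aux15.substr_all, ← hYeq]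
        exact hYV'.trans hV'p₂
      · have hp₂ie2 : p₂ = ie2 :=
          Aux15.nthOcc_unique (by omega)
            (by rw [hk₂] at hp₂occ; exact hp₂occ) hie2
        have hctie2 : (S.take (ie2-1)).count σ = e + 1 := by
          have := Aux15.count_take_pred hie2; omega
        have hmie2 : m ≤ ie2 - 1 := Aux15.m_bound (c := e+1) hie2 (by omega)
        have hw1 : σ :: V' <+ substr S i1 (ie2 - 1) :=
          hV'p₁.trans (Aux15.substr_mono hi1.1 hi1p₁ hmie2)
        have hw2 : σ :: V' <+ substr S ie2 S.length := by
          rw [Aux15.substr_all]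
          rw [hp₂ie2] at hV'p₂
          exact hV'p₂
        exact hMCS0'.2.2.2 (σ :: V') hYV' hw1 hw2
  -- final contradiction, case on where the first copy starts
  have hk₁cases : k₁m1 = 0 ∨ k₁m1 = 1 := by omega
  rcases hk₁cases with hk₁0 | hk₁1
  · -- first copy starts at i1
    have hp₁i1 : p₁ = i1 :=
      Aux15.nthOcc_unique le_rfl (by rw [hk₁0] at hp₁occ; exact hp₁occ) hi1
    have hYm : Y <+ substr S i1 m := by
      rw [← hVY, ← hp₁i1]
      exact hV'p₁
    have hj1m : j1 ≤ m := hanch1.2 m hYm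
    have hi1j1 : i1 ≤ j1 := Aux15.sublist_nonempty_bound hYne hanch1.1
    have hZ'take : Z' <+ S.take j1 := by
      rw [hZ'split]
      refine Aux15.splice_take hi1.1 (by omega) ?_ ?_
      · rw [← hp₁i1]; exact hA'p₁
      · rw [hVY]; exact hanch1.1
    have hZ'drop : Z' <+ S.drop j1 := by
      rw [hZ'split]
      refine hc2.trans ?_
      have hdd : S.drop m = (S.drop j1).drop (m - j1) := by
        rw [List.drop_drop]; congr 1; omega
      rw [hdd]
      exact List.drop_sublist _ _
    have hw1' : Z' <+ substr S 1 j1 := by rw [Aux15.substr_one]; exact hZ'take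
    have hw2' : Z' <+ substr S (j1+1) S.length := by rw [Aux15.substr_drop]; exact hZ'drop
    have hZ'Z₀ := hMCS1.2.2.2 Z' (hZ₀Z.trans hZZ') hw1' hw2'
    have hlc := congrArg List.length hZ'Z₀
    have hlZ₀ := hZ₀Z.length_le
    omega
  · -- first copy starts at i2
    have hp₁i2 : p₁ = i2 :=
      Aux15.nthOcc_unique (t := 2) (by omega)
        (by rw [hk₁1] at hp₁occ; exact hp₁occ) hi2
    have hYm2 : Y <+ substr S i2 m := by
      rw [← hVY, ← hp₁i2]
      exact hV'p₁
    have hc₁e1 : (S.take m).count σ = e + 1 := by omega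
    have hoddℓ : S.count σ = 2*e + 1 := by omega
    rcases hcase2 with ⟨hZeq0, hside2⟩ | ⟨hodd2, j2, hanch2, hZ₀sub, hMCS2⟩
    · -- case (a) of Algorithm 2 : contradiction with the side condition
      have hex : ∃ j, Y <+ substr S i2 j := ⟨m, hYm2⟩
      have hanchj2 : LeftmostAnchor S Y i2 (Nat.find hex) :=
        ⟨Nat.find_spec hex, fun j' hj' => Nat.find_min' hex hj'⟩
      have hj2m : Nat.find hex ≤ m := Nat.find_min' hex hYm2
      have hoY : Odd (S.count σ) := Nat.odd_iff.2 (by omega)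
      refine hside2 hoY _ hanchj2 ?_
      rw [Aux15.substr_drop, ← hZeq0]
      have h1 : Z <+ S.drop m := by
        refine (hZZ'.trans ?_)
        rw [hZ'split]
        exact hc2
      refine h1.trans ?_
      have hdd : S.drop m = (S.drop (Nat.find hex)).drop (m - Nat.find hex) := by
        rw [List.drop_drop]; congr 1; omega
      rw [hdd]
      exact List.drop_sublist _ _
    · -- case (b) of Algorithm 2
      have hj2m : j2 ≤ m := hanch2.2 m hYm2
      have hi2j2 : i2 ≤ j2 := Aux15.sublist_nonempty_bound hYne hanch2.1
      have hZ'take : Z' <+ S.take j2 := by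
        rw [hZ'split]
        refine Aux15.splice_take hi2.1 (by omega) ?_ ?_
        · rw [← hp₁i2]; exact hA'p₁
        · rw [hVY]; exact hanch2.1
      have hZ'drop : Z' <+ S.drop j2 := by
        rw [hZ'split]
        refine hc2.trans ?_
        have hdd : S.drop m = (S.drop j2).drop (m - j2) := by
          rw [List.drop_drop]; congr 1; omega
        rw [hdd]
        exact List.drop_sublist _ _
      have hw1' : Z' <+ substr S 1 j2 := by rw [Aux15.substr_one]; exact hZ'take
      have hw2' : Z' <+ substr S (j2+1) S.length := by rw [Aux15.substr_drop]; exact hZ'drop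
      have hZ'Z := hMCS2.2.2.2 Z' hZZ' hw1' hw2'
      have hlc := congrArg List.length hZ'Z
      omega
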